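/- Let R = μ₀R⁰ + Σ_{i=1}^m μᵢR^{Jᵢ} be a quasi-Clifford algebraic curvature tensor on a scalar product space (V,g) with Hurwitz-like constants c₁,…,c_m. If X ∈ V is nonnull, λ ∈ ℝ with λ ≠ μ₀, and Y ∈ V satisfies 𝒥_X(Y) = ε_X·λ·Y, then 𝒥_Y(X) = ( μ₀·ε_Y + (μ₀²·g(X,Y)² − 9·Σ_{i=1}^m cᵢ·μᵢ²·g(Y,JᵢX)²) / (ε_X·(λ−μ₀)) )·X; in particular X is an eigenvector of 𝒥_Y. -/

import Mathlib

open Module Finset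

/-- The algebraic curvature tensor `R⁰` of constant sectional curvature one. -/
def R0 {V : Type*} [AddCommGroup V] [Module ℝ V] (g : LinearMap.BilinForm ℝ V)
    (X Y Z W : V) : ℝ :=
  g Y Z * g X W - g X Z * g Y W

/-- The algebraic curvature tensor `R^J` generated by a `g`-skew-adjoint endomorphism `J`. -/
def RJ {V : Type*} [AddCommGroup V] [Module ℝ V] (g : LinearMap.BilinForm ℝ V)
    (J : V →ₗ[ℝ] V) (X Y Z W : V) : ℝ :=
  g (J X) Z * g (J Y) W - g (J Y) Z * g (J X) W + 2 * g (J X) Y * g (J Z) W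
/-- for a quasi-Clifford curvature tensor, a nonnull `X` and an eigenvector
`Y` of `𝒥_X` with `𝒥_X(Y) = ε_X λ Y`, `λ ≠ μ₀`, one has an explicit formula for
`𝒥_Y(X)`; in particular `X` is an eigenvector of `𝒥_Y`. -/
theorem quasiClifford_dual_formula
    {V : Type*} [AddCommGroup V] [Module ℝ V] [FiniteDimensional ℝ V]
    (g : LinearMap.BilinForm ℝ V) (hsymm : ∀ x y, g x y = g y x) (hnd : g.Nondegenerate)
    {m : ℕ} (μ₀ : ℝ) (μ c : Fin m → ℝ) (J : Fin m → V →ₗ[ℝ] V)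
    (hskew : ∀ i, ∀ x y : V, g (J i x) y = - g x (J i y))
    (hhur : ∀ i j, J i ∘ₗ J j + J j ∘ₗ J i
      = ((if i = j then 2 * c i else 0 : ℝ) • LinearMap.id : V →ₗ[ℝ] V))
    (R : V → V → V → V → ℝ)
    (hR : ∀ X Y Z W, R X Y Z W = μ₀ * R0 g X Y Z W + ∑ i, μ i * RJ g (J i) X Y Z W)
    (Jac : V → V →ₗ[ℝ] V)
    (hJac : ∀ X Y Z, g (Jac X Y) Z = R Y X X Z)
    (X Y : V) (hX : g X X ≠ 0) (lam : ℝ) (hlam : lam ≠ μ₀)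
    (hY : Jac X Y = (g X X * lam) • Y) :
    Jac Y X = (μ₀ * g Y Y +
        (μ₀ ^ 2 * (g X Y) ^ 2 - 9 * ∑ i, c i * (μ i) ^ 2 * (g Y (J i X)) ^ 2) /
          (g X X * (lam - μ₀))) • X ∧
      ∃ lam' : ℝ, Module.End.HasEigenvector (Jac Y) lam' X := by
  have hK : g X X * (lam - μ₀) ≠ 0 := mul_ne_zero hX (sub_ne_zero.mpr hlam)
  have hzero : ∀ i (x : V), g (J i x) x = 0 := by
    intro i x
    have h1 := hskew i x x
    have h2 := hsymm x (J i x)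
    linarith
  have hbs : ∀ i, g (J i X) Y = - g (J i Y) X := by
    intro i
    rw [hskew i X Y, hsymm]
  have hs2 : ∀ i, (g (J i Y) X) ^ 2 = (g Y (J i X)) ^ 2 := by
    intro i
    rw [hskew i Y X]; ring
  -- key identity from the eigenvector hypothesis
  have key : ∀ Z, (g X X * (lam - μ₀)) * g Y Z
      = -(μ₀ * g X Y * g X Z) + ∑ i, 3 * μ i * (g (J i Y) X * g (J i X) Z) := by
    intro Z
    have h1 : g (Jac X Y) Z = (g X X * lam) * g Y Z := by
      rw [hY]; simp
    have h2 := hJac X Y Z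
    rw [hR] at h2
    rw [Finset.sum_congr rfl
      (fun i _ => show μ i * RJ g (J i) Y X X Z = 3 * μ i * (g (J i Y) X * g (J i X) Z) by
        simp only [RJ, hzero]; ring)] at h2
    rw [h1] at h2
    simp only [R0] at h2
    rw [hsymm Y X] at h2
    linear_combination h2
  -- main scalar identity
  have main : ∀ Z, g (Jac Y X) Z = (μ₀ * g Y Y +
      (μ₀ ^ 2 * (g X Y) ^ 2 - 9 * ∑ i, c i * (μ i) ^ 2 * (g Y (J i X)) ^ 2) /
        (g X X * (lam - μ₀))) * g X Z := by
    intro Z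
    -- the double-sum symmetrization using the Hurwitz relations
    have dsum : ∀ t : Fin m → ℝ,
        ∑ i, ∑ j, t i * (t j * g (J i (J j X)) Z) = ∑ i, c i * t i ^ 2 * g X Z := by
      intro t
      have h2 : ∀ i j, g (J i (J j X)) Z + g (J j (J i X)) Z
          = (if i = j then 2 * c i else 0) * g X Z := by
        intro i j
        have h := congrArg (fun L : V →ₗ[ℝ] V => g (L X) Z) (hhur i j)
        rcases eq_or_ne i j with hij | hij <;>
          simp only [hij, if_true, if_false, ite_true, ite_false, if_pos, if_neg,
            ne_eq, not_false_iff] at h ⊢ <;>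
          simpa [smul_eq_mul] using h
      have hdouble : (∑ i, ∑ j, t i * (t j * g (J i (J j X)) Z))
          + (∑ i, ∑ j, t i * (t j * g (J i (J j X)) Z))
          = ∑ i, 2 * (c i * t i ^ 2 * g X Z) := by
        calc (∑ i, ∑ j, t i * (t j * g (J i (J j X)) Z))
              + (∑ i, ∑ j, t i * (t j * g (J i (J j X)) Z))
            = (∑ i, ∑ j, t i * (t j * g (J i (J j X)) Z))
              + (∑ j, ∑ i, t i * (t j * g (J i (J j X)) Z)) := by
              rw [Finset.sum_comm (s := (univ : Finset (Fin m)))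
                (t := (univ : Finset (Fin m)))
                (f := fun i j => t i * (t j * g (J i (J j X)) Z))]
          _ = ∑ i, ∑ j, (t i * (t j * g (J i (J j X)) Z)
              + t j * (t i * g (J j (J i X)) Z)) := by
              rw [← Finset.sum_add_distrib]
              exact Finset.sum_congr rfl fun i _ => by rw [← Finset.sum_add_distrib]
          _ = ∑ i, ∑ j, t i * t j * ((if i = j then 2 * c i else 0) * g X Z) := by
              refine Finset.sum_congr rfl fun i _ => Finset.sum_congr rfl fun j _ => ?_
              rw [← h2 i j]; ring
          _ = ∑ i, 2 * (c i * t i ^ 2 * g X Z) := by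
              refine Finset.sum_congr rfl fun i _ => ?_
              simp only [mul_ite, mul_zero, ite_mul, zero_mul]
              rw [Finset.sum_ite_eq]
              simp only [mem_univ, if_true]
              ring
      have h3 : ∑ i, 2 * (c i * t i ^ 2 * g X Z)
          = 2 * ∑ i, c i * t i ^ 2 * g X Z := by rw [Finset.mul_sum]
      rw [h3] at hdouble
      linarith
    -- expansion of g (Jac Y X) Z
    have e1 : g (Jac Y X) Z = μ₀ * (g Y Y * g X Z - g X Y * g Y Z)
        + ∑ i, 3 * μ i * (g (J i X) Y * g (J i Y) Z) := by
      rw [hJac Y X Z, hR, Finset.sum_congr rfl (fun i _ =>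
        show μ i * RJ g (J i) X Y Y Z = 3 * μ i * (g (J i X) Y * g (J i Y) Z) from by
          simp only [RJ, hzero]; ring)]
      simp only [R0]
    -- the key identity applied at J i Z
    have e2 : ∀ i, (g X X * (lam - μ₀)) * g (J i Y) Z
        = -(μ₀ * g X Y * g (J i X) Z)
          + ∑ j, 3 * μ j * (g (J j Y) X * g (J i (J j X)) Z) := by
      intro i
      have h1 := key (J i Z)
      rw [Finset.sum_congr rfl (fun j _ =>
        show 3 * μ j * (g (J j Y) X * g (J j X) (J i Z))
          = -(3 * μ j * (g (J j Y) X * g (J i (J j X)) Z)) by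
            rw [hsymm (J j X) (J i Z), hskew i Z (J j X), hsymm Z (J i (J j X))]; ring),
        Finset.sum_neg_distrib] at h1
      rw [hskew i Y Z]
      have hx : g X (J i Z) = - g (J i X) Z := by rw [hskew i X Z]; ring
      rw [hx] at h1
      linear_combination -h1
    -- per-term combination
    have e3 : ∀ i, (g X X * (lam - μ₀)) * (3 * μ i * (g (J i X) Y * g (J i Y) Z))
        = μ₀ * g X Y * (3 * μ i * (g (J i Y) X * g (J i X) Z))
          - ∑ j, (3 * μ i * g (J i Y) X)
              * ((3 * μ j * g (J j Y) X) * g (J i (J j X)) Z) := by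
      intro i
      have hms : (3 * μ i * g (J i Y) X)
            * (∑ j, 3 * μ j * (g (J j Y) X * g (J i (J j X)) Z))
          = ∑ j, (3 * μ i * g (J i Y) X)
              * ((3 * μ j * g (J j Y) X) * g (J i (J j X)) Z) := by
        rw [Finset.mul_sum]
        exact Finset.sum_congr rfl fun j _ => by ring
      rw [hbs i]
      linear_combination (-(3 * μ i * g (J i Y) X)) * e2 i - hms
    -- summing up
    have e4 : (g X X * (lam - μ₀)) * (∑ i, 3 * μ i * (g (J i X) Y * g (J i Y) Z))
        = μ₀ * g X Y * (∑ i, 3 * μ i * (g (J i Y) X * g (J i X) Z))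
          - ∑ i, c i * (3 * μ i * g (J i Y) X) ^ 2 * g X Z := by
      have hd := dsum (fun i => 3 * μ i * g (J i Y) X)
      rw [Finset.mul_sum, Finset.sum_congr rfl (fun i _ => e3 i),
        Finset.sum_sub_distrib, hd, ← Finset.mul_sum]
    -- rewriting the sum of squares
    have hDE : ∑ i, c i * (3 * μ i * g (J i Y) X) ^ 2 * g X Z
        = 9 * (∑ i, c i * (μ i) ^ 2 * (g Y (J i X)) ^ 2) * g X Z := by
      rw [Finset.sum_congr rfl (fun i _ =>
        show c i * (3 * μ i * g (J i Y) X) ^ 2 * g X Z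
          = 9 * (c i * (μ i) ^ 2 * (g Y (J i X)) ^ 2 * g X Z) by
            rw [← hs2 i]; ring),
        ← Finset.mul_sum, ← Finset.sum_mul]
      ring
    have hfin : (g X X * (lam - μ₀)) * g (Jac Y X) Z
        = (g X X * (lam - μ₀)) * (μ₀ * g Y Y) * g X Z
          + (μ₀ ^ 2 * (g X Y) ^ 2
            - 9 * ∑ i, c i * (μ i) ^ 2 * (g Y (J i X)) ^ 2) * g X Z := by
      linear_combination (g X X * (lam - μ₀)) * e1 + e4 - μ₀ * g X Y * key Z - hDE
    field_simp
    linear_combination hfin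
  -- conclude the vector identity via nondegeneracy
  have hvec : Jac Y X = (μ₀ * g Y Y +
      (μ₀ ^ 2 * (g X Y) ^ 2 - 9 * ∑ i, c i * (μ i) ^ 2 * (g Y (J i X)) ^ 2) /
        (g X X * (lam - μ₀))) • X := by
    have h0 := hnd.1 (Jac Y X - (μ₀ * g Y Y +
      (μ₀ ^ 2 * (g X Y) ^ 2 - 9 * ∑ i, c i * (μ i) ^ 2 * (g Y (J i X)) ^ 2) /
        (g X X * (lam - μ₀))) • X)
    have h1 : Jac Y X - (μ₀ * g Y Y +
        (μ₀ ^ 2 * (g X Y) ^ 2 - 9 * ∑ i, c i * (μ i) ^ 2 * (g Y (J i X)) ^ 2) /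
          (g X X * (lam - μ₀))) • X = 0 := by
      apply h0
      intro Z
      simp only [map_sub, map_smul, LinearMap.sub_apply, LinearMap.smul_apply,
        smul_eq_mul, main Z]
      ring
    exact sub_eq_zero.mp h1
  have hX0 : X ≠ 0 := fun h => hX (by simp [h])
  refine ⟨hvec, μ₀ * g Y Y +
      (μ₀ ^ 2 * (g X Y) ^ 2 - 9 * ∑ i, c i * (μ i) ^ 2 * (g Y (J i X)) ^ 2) /
        (g X X * (lam - μ₀)), ?_⟩
  exact ⟨Module.End.mem_eigenspace_iff.mpr hvec, hX0⟩
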